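/- Let c = √(2/(√2·e − e)) and d = 1/√(√2·e − e). Then c ≥ d√2 and d ≥ 1/(ce) + c/2, and among all pairs (c, d) of positive reals satisfying these two constraints, this pair minimizes d. -/

import Mathlib

set_option maxHeartbeats 1000000


theorem stmt_14 :
    let e := Real.exp 1
    let c := Real.sqrt (2 / (Real.sqrt 2 * e - e))
    let d := 1 / Real.sqrt (Real.sqrt 2 * e - e)
    c ≥ d * Real.sqrt 2 ∧ d ≥ 1 / (c * e) + c / 2 ∧
      ∀ c' d' : ℝ, 0 < c' → 0 < d' → c' ≥ d' * Real.sqrt 2 →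
        d' ≥ 1 / (c' * e) + c' / 2 → d ≤ d' := by
  intro e c d
  have he : e = Real.exp 1 := rfl
  have epos : (0:ℝ) < e := Real.exp_pos 1
  have hs2 : Real.sqrt 2 ^ 2 = 2 := Real.sq_sqrt (by norm_num)
  have hs0 : (0:ℝ) ≤ Real.sqrt 2 := Real.sqrt_nonneg 2
  have hs1 : (1:ℝ) < Real.sqrt 2 := by nlinarith
  set s := Real.sqrt 2 with hs
  have ha : 0 < s * e - e := by nlinarith
  have ht2 : Real.sqrt (s * e - e) ^ 2 = s * e - e := Real.sq_sqrt ha.le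
  have ht0 : 0 < Real.sqrt (s * e - e) := Real.sqrt_pos.mpr ha
  set t := Real.sqrt (s * e - e) with ht
  have hc' : c = s / t := by
    show Real.sqrt (2 / (s * e - e)) = s / t
    rw [Real.sqrt_div (by norm_num : (0:ℝ) ≤ 2), ht, hs]
  have hd' : d = 1 / t := rfl
  have hcpos : 0 < c := by rw [hc']; positivity
  clear_value e c d s t
  refine ⟨?_, ?_, ?_⟩
  · apply ge_of_eq
    rw [hc', hd']
    ring
  · apply ge_of_eq
    rw [hc', hd']
    have h1 : s ≠ 0 := by positivity
    have h2 : t ≠ 0 := ne_of_gt ht0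
    have h3 : e ≠ 0 := ne_of_gt epos
    field_simp
    linear_combination (-2)*ht2 + (-e)*hs2
  · intro c' d' hc0 hd0 h1 h2
    rw [hd']
    -- Step 1: c' ≥ s / (c'*e) + c'*s/2
    have h3 : c' ≥ s / (c' * e) + c' * s / 2 := by
      have hss : (0:ℝ) < s := by linarith
      have := mul_le_mul_of_nonneg_right h2 hss.le
      have hre : (1 / (c' * e) + c' / 2) * s = s / (c' * e) + c' * s / 2 := by ring
      nlinarith [this]
    -- Step 2: c'^2 * e * (2 - s) ≥ 2 * s
    have key1 : c' ^ 2 * e * (2 - s) ≥ 2 * s := by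
      have h4 := mul_le_mul_of_nonneg_right h3 (by positivity : (0:ℝ) ≤ 2 * c' * e)
      have hce : c' * e ≠ 0 := by positivity
      have hlhs : (s / (c' * e) + c' * s / 2) * (2 * c' * e) = 2 * s + c' ^ 2 * s * e := by
        field_simp
      nlinarith [h4, hlhs]
    -- Step 3: c' * t ≥ s
    have key2 : c' * t ≥ s := by
      have hsq : (c' * t) ^ 2 ≥ s ^ 2 := by
        have h2s : 2 - s = s * (s - 1) := by nlinarith
        have : c' ^ 2 * (s * e - e) ≥ 2 := by nlinarith [key1, h2s]
        nlinarith [ht2, hs2, this]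
      nlinarith [hsq, mul_pos hc0 ht0]
    -- Step 4: 1/(c'*e) + c'/2 ≥ 1/t
    have hce : (0:ℝ) < c' * e := mul_pos hc0 epos
    have prod : (c' * t - s) * (c' * t + s - 2) ≥ 0 := by
      apply mul_nonneg
      · linarith
      · linarith
    have key3 : 1 / (c' * e) + c' / 2 ≥ 1 / t := by
      rw [ge_iff_le, div_add_div _ _ (ne_of_gt hce) two_ne_zero,
        div_le_div_iff₀ ht0 (mul_pos hce two_pos)]
      nlinarith [mul_nonneg epos.le prod, ht0, ht2]
    linarith [h2, key3]
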